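/- In the reduction graph H built from a Planar (≤3,3)-SAT formula φ with m clauses, if H has an edge g-colouring using at least m+1 distinct colours then φ has a satisfying assignment. -/

import Mathlib

open Finset

variable {V : Type*}

/-- The set of colours appearing on edges incident to vertex `v`. -/
def vColors (G : SimpleGraph V) (f : V → V → ℕ) (v : V) : Set ℕ :=
  {c | ∃ u, G.Adj v u ∧ f v u = c}

/-- The set of colours used on edges of `G`. -/
def colorsOf (G : SimpleGraph V) (f : V → V → ℕ) : Set ℕ :=
  {c | ∃ u v, G.Adj u v ∧ f u v = c}

/-- An edge `q`-colouring: a symmetric assignment of colours to edges such that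
every vertex is incident with at most `q` distinct colours. -/
def IsEdgeQColoring (G : SimpleGraph V) (q : ℕ) (f : V → V → ℕ) : Prop :=
  (∀ u v, f u v = f v u) ∧ ∀ v, (vColors G f v).ncard ≤ q

/-- `S`-composability: every vertex of `S` sees at most `q - 1` non-zero colours. -/
def IsComposable (G : SimpleGraph V) (q : ℕ) (S : Set V) (f : V → V → ℕ) : Prop :=
  ∀ v ∈ S, ((vColors G f v) \ {0}).ncard ≤ q - 1

/-- `χ'_q(G, S)`: maximum number of non-zero colours of an `S`-composable edge
`q`-colouring of `G`. -/
noncomputable def chiq (G : SimpleGraph V) (q : ℕ) (S : Set V) : ℕ :=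
  sSup {k | ∃ f, IsEdgeQColoring G q f ∧ IsComposable G q S f ∧
    ((colorsOf G f) \ {0}).ncard = k}

/-- `χ'_q(G)`: maximum number of distinct colours of an edge `q`-colouring of `G`. -/
noncomputable def chimax (G : SimpleGraph V) (q : ℕ) : ℕ :=
  sSup {k | ∃ f, IsEdgeQColoring G q f ∧ (colorsOf G f).ncard = k}

/-- `M` is a matching in `G`: a set of edges, pairwise not sharing a vertex. -/
def IsMatchingSet (G : SimpleGraph V) (M : Set (Sym2 V)) : Prop :=
  M ⊆ G.edgeSet ∧ ∀ e ∈ M, ∀ e' ∈ M, e ≠ e' → ∀ v, v ∈ e → v ∉ e'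

/-- `M` is a maximal matching in `G`. -/
def IsMaximalMatchingSet (G : SimpleGraph V) (M : Set (Sym2 V)) : Prop :=
  IsMatchingSet G M ∧ ∀ e ∈ G.edgeSet, ∃ e' ∈ M, ∃ v, v ∈ e ∧ v ∈ e'

/-- `X` is a vertex cover of `G`. -/
def IsVertexCover (G : SimpleGraph V) (X : Set V) : Prop :=
  ∀ e ∈ G.edgeSet, ∃ v ∈ X, v ∈ e

/-- A layering of `G`. -/
def IsLayering (G : SimpleGraph V) (lam : V → ℤ) : Prop :=
  ∀ u v, G.Adj u v → |lam u - lam v| ≤ 1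

/-- The graph part `G_m` of the `(λ, r, m)`-stratification: delete all edges `uv`
with `λ(u) ≡ m` and `λ(v) ≡ m + 1 (mod r)`. -/
def stratGraph (G : SimpleGraph V) (lam : V → ℤ) (r m : ℤ) : SimpleGraph V where
  Adj u v := G.Adj u v ∧
    ¬ ((lam u ≡ m [ZMOD r] ∧ lam v ≡ m + 1 [ZMOD r]) ∨
       (lam v ≡ m [ZMOD r] ∧ lam u ≡ m + 1 [ZMOD r]))
  symm := by
    constructor
    intro u v h
    exact ⟨h.1.symm, fun hc => h.2 hc.symm⟩
  loopless := ⟨fun v h => G.loopless.irrefl v h.1⟩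

/-- The set `S_m` of the `(λ, r, m)`-stratification: vertices incident with deleted
edges. -/
def stratSet (G : SimpleGraph V) (lam : V → ℤ) (r m : ℤ) : Set V :=
  {v | ∃ u, G.Adj v u ∧ ¬ (stratGraph G lam r m).Adj v u}
/-- An edge `g`-colouring for a per-vertex bound `g`. -/
def IsEdgeGColoring (G : SimpleGraph V) (g : V → ℕ) (f : V → V → ℕ) : Prop :=
  (∀ u v, f u v = f v u) ∧ ∀ v, (vColors G f v).ncard ≤ g v

/-- Vertices of the reduction graph `H`: clause vertices `c_i`, variable copies
`x_{j,a}`, conflict vertices `n_{j,a,b}`, and the apex vertex `u`. -/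
inductive HV (n m : ℕ) where
  | clause (i : Fin m)
  | varc (j : Fin n) (a : Fin 3)
  | confl (j : Fin n) (a b : Fin 3)
  | apex
  deriving DecidableEq

/-- The reduction graph `H` built from a `(≤3,3)`-SAT formula with `m` clauses
and `n` variables, where variable `j` occurs in clause `occ j a` with sign
`sgn j a` for `a ∈ {0,1,2}`.  Variable copy `x_{j,a}` is joined to its clause;
conflict vertex `n_{j,a,b}` (for `a < b`) is joined to `x_{j,a}` and `x_{j,b}`
iff the two occurrences have opposite signs; the apex `u` is joined to every
clause vertex and every conflict vertex. -/
def satGraph (n m : ℕ) (occ : Fin n → Fin 3 → Fin m) (sgn : Fin n → Fin 3 → Bool) :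
    SimpleGraph (HV n m) :=
  SimpleGraph.fromRel (fun x y =>
    match x, y with
    | HV.clause i, HV.varc j a => occ j a = i
    | HV.varc j' a', HV.confl j a b =>
        j = j' ∧ a < b ∧ (a' = a ∨ a' = b) ∧ sgn j a ≠ sgn j b
    | HV.apex, HV.clause _ => True
    | HV.apex, HV.confl _ a b => a < b
    | _, _ => False)

/-- The per-vertex colour bound `g` of the reduction: `g(u) = 1`, `g(c_i) = 2`,
`g(x_{j,a}) = 1`, `g(n_{j,a,b}) = 2`. -/
def satBound (n m : ℕ) : HV n m → ℕ
  | HV.clause _ => 2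
  | HV.varc _ _ => 1
  | HV.confl _ _ _ => 2
  | HV.apex => 1

section Aux

open Classical in
private lemma hv_finite {n m : ℕ} : Finite (HV n m) := by
  apply Finite.of_injective (fun v : HV n m =>
    (match v with
     | HV.clause i => Sum.inl i
     | HV.varc j a => Sum.inr (Sum.inl (j, a))
     | HV.confl j a b => Sum.inr (Sum.inr (Sum.inl (j, a, b)))
     | HV.apex => Sum.inr (Sum.inr (Sum.inr ())) :
     Fin m ⊕ (Fin n × Fin 3) ⊕ (Fin n × Fin 3 × Fin 3) ⊕ Unit))
  intro x y h
  cases x <;> cases y <;> simp_all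

private lemma vColors_finite' {V : Type*} [Finite V] (G : SimpleGraph V) (f : V → V → ℕ)
    (v : V) : (vColors G f v).Finite := by
  have : vColors G f v ⊆ f v '' Set.univ := by
    rintro c ⟨u, _, rfl⟩; exact ⟨u, trivial, rfl⟩
  exact (Set.finite_univ.image _).subset this

private lemma ncard_le_one_elim {α : Type*} {s : Set α} (hfin : s.Finite) (h : s.ncard ≤ 1)
    {a b : α} (ha : a ∈ s) (hb : b ∈ s) : a = b := by
  by_contra hab
  have hsub : ({a, b} : Set α) ⊆ s := by
    intro x hx; rcases hx with rfl | hx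
    · exact ha
    · rcases hx with rfl; exact hb
  have h2 := Set.ncard_le_ncard hsub hfin
  rw [Set.ncard_pair hab] at h2
  omega

private lemma ncard_le_two_elim {α : Type*} {s : Set α} (hfin : s.Finite) (h : s.ncard ≤ 2)
    {z a b : α} (hz : z ∈ s) (ha : a ∈ s) (hb : b ∈ s) (haz : a ≠ z) (hbz : b ≠ z) : a = b := by
  by_contra hab
  have hsub : ({z, a, b} : Set α) ⊆ s := by
    intro x hx
    rcases hx with rfl | hx
    · exact hz
    · rcases hx with rfl | hx
      · exact ha
      · rcases hx with rfl; exact hb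
  have h3 : ({z, a, b} : Set α).ncard = 3 := by
    rw [Set.ncard_insert_of_notMem (by simp [Ne.symm haz, Ne.symm hbz]),
      Set.ncard_pair hab]
  have h4 := Set.ncard_le_ncard hsub hfin
  omega

end Aux

section Main

variable {n m : ℕ} {occ : Fin n → Fin 3 → Fin m} {sgn : Fin n → Fin 3 → Bool}

private lemma edge_cases {u v : HV n m} (h : (satGraph n m occ sgn).Adj u v) :
    u = HV.apex ∨ v = HV.apex ∨ (∃ j a, u = HV.varc j a) ∨ (∃ j a, v = HV.varc j a) := by
  rw [satGraph, SimpleGraph.fromRel_adj] at h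
  cases u <;> cases v <;> simp_all

private lemma clause_nbr {i : Fin m} {u : HV n m}
    (h : (satGraph n m occ sgn).Adj (HV.clause i) u) :
    u = HV.apex ∨ ∃ j a, u = HV.varc j a ∧ occ j a = i := by
  rw [satGraph, SimpleGraph.fromRel_adj] at h
  cases u <;> simp_all

private lemma adj_apex_clause (i : Fin m) :
    (satGraph n m occ sgn).Adj HV.apex (HV.clause i) := by
  rw [satGraph, SimpleGraph.fromRel_adj]
  exact ⟨by simp, Or.inl trivial⟩

private lemma adj_varc_clause (j : Fin n) (a : Fin 3) :
    (satGraph n m occ sgn).Adj (HV.varc j a) (HV.clause (occ j a)) := by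
  rw [satGraph, SimpleGraph.fromRel_adj]
  exact ⟨by simp, Or.inr rfl⟩

private lemma adj_varc_confl_left {j : Fin n} {a b : Fin 3} (hab : a < b)
    (hs : sgn j a ≠ sgn j b) :
    (satGraph n m occ sgn).Adj (HV.varc j a) (HV.confl j a b) := by
  rw [satGraph, SimpleGraph.fromRel_adj]
  exact ⟨by simp, Or.inl ⟨rfl, hab, Or.inl rfl, hs⟩⟩

private lemma adj_varc_confl_right {j : Fin n} {a b : Fin 3} (hab : a < b)
    (hs : sgn j a ≠ sgn j b) :
    (satGraph n m occ sgn).Adj (HV.varc j b) (HV.confl j a b) := by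
  rw [satGraph, SimpleGraph.fromRel_adj]
  exact ⟨by simp, Or.inl ⟨rfl, hab, Or.inr rfl, hs⟩⟩

private lemma adj_apex_confl {j : Fin n} {a b : Fin 3} (hab : a < b) :
    (satGraph n m occ sgn).Adj HV.apex (HV.confl j a b) := by
  rw [satGraph, SimpleGraph.fromRel_adj]
  exact ⟨by simp, Or.inl hab⟩

end Main


/-- if `H` has an edge `g`-colouring using at least `m + 1`
distinct colours, then the formula has a satisfying assignment. -/
theorem stmt17 (n m : ℕ)
    (occ : Fin n → Fin 3 → Fin m) (sgn : Fin n → Fin 3 → Bool)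
    (hocc : ∀ j, Function.Injective (occ j))
    (hcol : ∃ f : HV n m → HV n m → ℕ,
      IsEdgeGColoring (satGraph n m occ sgn) (satBound n m) f ∧
      m + 1 ≤ (colorsOf (satGraph n m occ sgn) f).ncard) :
    ∃ σ : Fin n → Bool, ∀ i : Fin m, ∃ j a, occ j a = i ∧ sgn j a = σ j := by
  classical
  obtain ⟨f, ⟨hsym, hbd⟩, hcard⟩ := hcol
  rcases Nat.eq_zero_or_pos m with rfl | hm
  · exact ⟨fun _ => true, fun i => i.elim0⟩
  haveI : Finite (HV n m) := hv_finite
  set G := satGraph n m occ sgn with hGdef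
  have hvfin : ∀ v, (vColors G f v).Finite := vColors_finite' G f
  -- the apex colour
  set i0 : Fin m := ⟨0, hm⟩ with hi0
  set z : ℕ := f HV.apex (HV.clause i0) with hz
  have hbd_apex : (vColors G f HV.apex).ncard ≤ 1 := by
    have := hbd HV.apex; simpa [satBound] using this
  have hA : ∀ v, G.Adj HV.apex v → f HV.apex v = z := by
    intro v hv
    exact ncard_le_one_elim (hvfin _) hbd_apex ⟨v, hv, rfl⟩
      ⟨HV.clause i0, adj_apex_clause i0, rfl⟩
  -- variable-copy colours
  set cv : Fin n → Fin 3 → ℕ := fun j a => f (HV.varc j a) (HV.clause (occ j a)) with hcv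
  have hB : ∀ j a v, G.Adj (HV.varc j a) v → f (HV.varc j a) v = cv j a := by
    intro j a v hv
    have hbv : (vColors G f (HV.varc j a)).ncard ≤ 1 := by
      have := hbd (HV.varc j a); simpa [satBound] using this
    exact ncard_le_one_elim (hvfin _) hbv ⟨v, hv, rfl⟩
      ⟨HV.clause (occ j a), adj_varc_clause j a, rfl⟩
  have z_mem_clause : ∀ i : Fin m, z ∈ vColors G f (HV.clause i) := by
    intro i
    exact ⟨HV.apex, (adj_apex_clause i).symm, by rw [hsym]; exact hA _ (adj_apex_clause i)⟩
  have cv_mem_clause : ∀ j a, cv j a ∈ vColors G f (HV.clause (occ j a)) := by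
    intro j a
    exact ⟨HV.varc j a, (adj_varc_clause j a).symm, by rw [hsym]⟩
  -- at most one non-z colour per clause
  have hC : ∀ (i : Fin m) (c1 c2 : ℕ), c1 ∈ vColors G f (HV.clause i) →
      c2 ∈ vColors G f (HV.clause i) → c1 ≠ z → c2 ≠ z → c1 = c2 := by
    intro i c1 c2 h1 h2 h1z h2z
    have hb2 : (vColors G f (HV.clause i)).ncard ≤ 2 := by
      have := hbd (HV.clause i); simpa [satBound] using this
    exact ncard_le_two_elim (hvfin _) hb2 (z_mem_clause i) h1 h2 h1z h2z
  -- the distinguished colour of each clause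
  set d : Fin m → ℕ := fun i =>
    if h : ((vColors G f (HV.clause i)) \ {z}).Nonempty then h.choose else z with hd
  have d_eq : ∀ i c, c ∈ vColors G f (HV.clause i) → c ≠ z → c = d i := by
    intro i c hcmem hcz
    have hne : ((vColors G f (HV.clause i)) \ {z}).Nonempty := ⟨c, hcmem, hcz⟩
    have hspec := hne.choose_spec
    rw [hd]; simp only [dif_pos hne]
    exact hC i c _ hcmem hspec.1 hcz hspec.2
  have d_mem : ∀ i, d i ≠ z → d i ∈ vColors G f (HV.clause i) := by
    intro i hiz
    by_cases hne : ((vColors G f (HV.clause i)) \ {z}).Nonempty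
    · have hspec := hne.choose_spec
      rw [hd]; simp only [dif_pos hne]; exact hspec.1
    · exfalso; apply hiz; rw [hd]; simp only [dif_neg hne]
  -- edge classification
  have hEdge : ∀ u v, G.Adj u v → f u v = z ∨ ∃ j a, f u v = cv j a := by
    intro u v huv
    rcases edge_cases huv with rfl | rfl | ⟨j, a, rfl⟩ | ⟨j, a, rfl⟩
    · exact Or.inl (hA v huv)
    · exact Or.inl (by rw [hsym]; exact hA u huv.symm)
    · exact Or.inr ⟨j, a, hB j a v huv⟩
    · exact Or.inr ⟨j, a, by rw [hsym]; exact hB j a u huv.symm⟩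
  -- counting
  set Rf : Finset ℕ := Finset.univ.image d with hRf
  have hsub : colorsOf G f ⊆ insert z (↑Rf : Set ℕ) := by
    rintro c ⟨u, v, huv, rfl⟩
    rcases hEdge u v huv with h | ⟨j, a, h⟩
    · rw [h]; exact Set.mem_insert _ _
    · by_cases hz' : cv j a = z
      · rw [h, hz']; exact Set.mem_insert _ _
      · right
        have : cv j a = d (occ j a) := d_eq _ _ (cv_mem_clause j a) hz'
        rw [h, this]
        simp [hRf]
  have h1 : (colorsOf G f).ncard ≤ (insert z Rf).card := by
    have := Set.ncard_le_ncard hsub (by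
      have : (insert z (↑Rf : Set ℕ)) = ↑(insert z Rf) := by simp
      rw [this]; exact (insert z Rf).finite_toSet)
    calc (colorsOf G f).ncard ≤ (insert z (↑Rf : Set ℕ)).ncard := this
      _ = (↑(insert z Rf) : Set ℕ).ncard := by norm_cast
      _ = (insert z Rf).card := Set.ncard_coe_finset _
  have h3 : (insert z Rf).card ≤ Rf.card + 1 := Finset.card_insert_le _ _
  have h4 : Rf.card ≤ m := by
    calc Rf.card ≤ Finset.univ.card := Finset.card_image_le
      _ = m := by simp
  have hzR : z ∉ Rf := by
    intro hzin
    have : insert z Rf = Rf := Finset.insert_eq_self.2 hzin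
    rw [this] at h1
    omega
  have hRm : Rf.card = m := by
    have h5 : (insert z Rf).card = Rf.card + 1 := Finset.card_insert_of_notMem hzR
    omega
  have hinj : Function.Injective d := by
    have hcard_eq : (Finset.image d Finset.univ).card = (Finset.univ : Finset (Fin m)).card := by
      rw [← hRf, hRm]; simp
    have := Finset.card_image_iff.1 hcard_eq
    exact fun a b hab => this (by simp) (by simp) hab
  have d_ne_z : ∀ i, d i ≠ z := by
    intro i h
    exact hzR (by rw [← h, hRf]; exact Finset.mem_image_of_mem d (Finset.mem_univ i))
  -- each clause has a distinguished variable copy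
  have witness : ∀ i : Fin m, ∃ j a, occ j a = i ∧ cv j a = d i := by
    intro i
    obtain ⟨u, hu, hfu⟩ := d_mem i (d_ne_z i)
    rcases clause_nbr hu with rfl | ⟨j, a, rfl, hocc_i⟩
    · exfalso
      apply d_ne_z i
      rw [← hfu, hsym]
      exact hA _ hu.symm
    · refine ⟨j, a, hocc_i, ?_⟩
      rw [← hfu, hsym]
      have := hB j a (HV.clause i) hu.symm
      rw [this]
  -- consistency of non-z variable copies of the same variable
  have hcons : ∀ j a b, cv j a ≠ z → cv j b ≠ z → sgn j a = sgn j b := by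
    intro j a b ha hb
    by_contra hne
    have key : ∀ p q : Fin 3, p < q → sgn j p ≠ sgn j q → cv j p ≠ z → cv j q ≠ z → False := by
      intro p q hpq hs hp hq
      have adj1 := adj_varc_confl_left (occ := occ) hpq hs
      have adj2 := adj_varc_confl_right (occ := occ) hpq hs
      have adjw := adj_apex_confl (occ := occ) (sgn := sgn) (j := j) hpq
      have hzw : z ∈ vColors G f (HV.confl j p q) :=
        ⟨HV.apex, adjw.symm, by rw [hsym]; exact hA _ adjw⟩
      have hpw : cv j p ∈ vColors G f (HV.confl j p q) :=
        ⟨HV.varc j p, adj1.symm, by rw [hsym]; exact hB j p _ adj1⟩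
      have hqw : cv j q ∈ vColors G f (HV.confl j p q) :=
        ⟨HV.varc j q, adj2.symm, by rw [hsym]; exact hB j q _ adj2⟩
      have hb2 : (vColors G f (HV.confl j p q)).ncard ≤ 2 := by
        have := hbd (HV.confl j p q); simpa [satBound] using this
      have heq : cv j p = cv j q := ncard_le_two_elim (hvfin _) hb2 hzw hpw hqw hp hq
      have h1' : cv j p = d (occ j p) := d_eq _ _ (cv_mem_clause j p) hp
      have h2' : cv j q = d (occ j q) := d_eq _ _ (cv_mem_clause j q) hq
      have : occ j p = occ j q := hinj (by rw [← h1', ← h2', heq])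
      have : p = q := hocc j this
      exact absurd this hpq.ne
    have hab : a ≠ b := fun h => hne (by rw [h])
    rcases lt_or_gt_of_ne hab with h | h
    · exact key a b h hne ha hb
    · exact key b a h (Ne.symm hne) hb ha
  -- define the assignment
  refine ⟨fun j => if h : ∃ a, cv j a ≠ z then sgn j h.choose else true, fun i => ?_⟩
  obtain ⟨j, a, hocc_i, hcvd⟩ := witness i
  have ha : cv j a ≠ z := by rw [hcvd]; exact d_ne_z i
  have hex : ∃ a, cv j a ≠ z := ⟨a, ha⟩
  refine ⟨j, a, hocc_i, ?_⟩
  simp only [dif_pos hex]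
  exact hcons j a hex.choose ha hex.choose_spec
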